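/- arXiv:1006.5518 — 3 statements merged into one kernel-verified Lean document; each statement's English description precedes it below -/
import Mathlib

section
/- Let (x(t), y(t)) be a differentiable solution of the system (P): dx/dt = f(x) + g(x)|y|², dy/dt = h(x)y + γ e^{iαt} a(βt). Define y₁(t) = y(t) + i (γ/α) e^{iαt} a(βt). Then the pair (x(t), y₁(t)) solves the transformed system dx/dt = f(x) + g(x)|y₁|² + (γ²/α²) g(x) |a(βt)|² − (2γ/α) g(x) Im{ y₁ e^{−iαt} \overline{a(βt)} }, dy₁/dt = h(x) y₁ − i (γ/α) e^{iαt} ( h(x) a(βt) − β a'(βt) ). -/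
open Real Set

private lemma key_abs_identity (z A E : ℂ) (c : ℝ) (hE : Complex.normSq E = 1) :
    ‖z + Complex.I * (c:ℂ) * E * A‖ ^ 2
      + c ^ 2 * ‖A‖ ^ 2
      - 2 * c * ((z + Complex.I * (c:ℂ) * E * A) * (starRingEnd ℂ) E * (starRingEnd ℂ) A).im
    = ‖z‖ ^ 2 := by
  have h1 : E.re * E.re + E.im * E.im = 1 := by
    simpa [Complex.normSq_apply] using hE
  rw [← Complex.normSq_eq_norm_sq, ← Complex.normSq_eq_norm_sq, ← Complex.normSq_eq_norm_sq]
  simp only [Complex.normSq_apply, Complex.mul_re, Complex.mul_im, Complex.add_re,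
    Complex.add_im, Complex.I_re, Complex.I_im, Complex.conj_re, Complex.conj_im,
    Complex.ofReal_re, Complex.ofReal_im]
  linear_combination (-c ^ 2 * (A.re * A.re + A.im * A.im)) * h1

/-- If `(x(t), y(t))` solves the forced system (P), then
`y₁(t) = y(t) + i (γ/α) e^{iαt} a(βt)` together with `x(t)` solves the averaged system
obtained by the first averaging transformation. -/
theorem first_averaging_transformation
    (n : ℕ)
    (f g : (Fin n → ℝ) → Fin n → ℝ) (h : (Fin n → ℝ) → ℂ)
    (hf : Continuous f) (hg : Continuous g) (hh : Continuous h)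
    (a a' : ℝ → ℂ)
    (ha : ∀ s : ℝ, HasDerivAt a (a' s) s)
    (haper : Function.Periodic a (2 * π))
    (α β γ : ℝ) (hα : 0 < α) (hβ : 0 < β) (hγ : 0 ≤ γ)
    (x : ℝ → Fin n → ℝ) (y : ℝ → ℂ)
    (hx : ∀ t : ℝ, HasDerivAt x
      (f (x t) + ‖y t‖ ^ 2 • g (x t)) t)
    (hy : ∀ t : ℝ, HasDerivAt y
      (h (x t) * y t + (γ : ℂ) * Complex.exp (Complex.I * ((α * t : ℝ) : ℂ)) * a (β * t)) t) :
    (∀ t : ℝ, HasDerivAt x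
      (f (x t)
        + ‖y t + Complex.I * ((γ / α : ℝ) : ℂ)
            * Complex.exp (Complex.I * ((α * t : ℝ) : ℂ)) * a (β * t)‖ ^ 2 • g (x t)
        + (γ ^ 2 / α ^ 2 * ‖a (β * t)‖ ^ 2) • g (x t)
        - (2 * γ / α *
            ((y t + Complex.I * ((γ / α : ℝ) : ℂ)
                * Complex.exp (Complex.I * ((α * t : ℝ) : ℂ)) * a (β * t))
              * Complex.exp (-(Complex.I * ((α * t : ℝ) : ℂ)))
              * (starRingEnd ℂ) (a (β * t))).im) • g (x t)) t) ∧
    (∀ t : ℝ, HasDerivAt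
      (fun s : ℝ => y s + Complex.I * ((γ / α : ℝ) : ℂ)
          * Complex.exp (Complex.I * ((α * s : ℝ) : ℂ)) * a (β * s))
      (h (x t) * (y t + Complex.I * ((γ / α : ℝ) : ℂ)
            * Complex.exp (Complex.I * ((α * t : ℝ) : ℂ)) * a (β * t))
        - Complex.I * ((γ / α : ℝ) : ℂ) * Complex.exp (Complex.I * ((α * t : ℝ) : ℂ))
            * (h (x t) * a (β * t) - (β : ℂ) * a' (β * t))) t) := by
  have hαne : α ≠ 0 := hα.ne'
  constructor
  · intro t
    set E := Complex.exp (Complex.I * ((α * t : ℝ) : ℂ)) with hEdef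
    set A := a (β * t) with hAdef
    have hE : Complex.normSq E = 1 := by
      rw [Complex.normSq_eq_norm_sq, hEdef, Complex.norm_exp]
      simp
    have hce : Complex.exp (-(Complex.I * ((α * t : ℝ) : ℂ))) = (starRingEnd ℂ) E := by
      rw [hEdef, ← Complex.exp_conj]
      congr 1
      simp [map_mul, Complex.conj_I, Complex.conj_ofReal]
    have hkey := key_abs_identity (y t) A E (γ / α) hE
    have e1 : (γ / α) ^ 2 = γ ^ 2 / α ^ 2 := div_pow γ α 2
    have e2 : 2 * (γ / α) = 2 * γ / α := (mul_div_assoc 2 γ α).symm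
    rw [e1, e2] at hkey
    have hvec : f (x t)
        + ‖y t + Complex.I * ((γ / α : ℝ) : ℂ) * E * A‖ ^ 2 • g (x t)
        + (γ ^ 2 / α ^ 2 * ‖A‖ ^ 2) • g (x t)
        - (2 * γ / α *
            ((y t + Complex.I * ((γ / α : ℝ) : ℂ) * E * A)
              * (starRingEnd ℂ) E * (starRingEnd ℂ) A).im) • g (x t)
        = f (x t) + ‖y t‖ ^ 2 • g (x t) := by
      rw [← hkey]
      module
    rw [hce, hvec]
    exact hx t
  · intro t
    set E := Complex.exp (Complex.I * ((α * t : ℝ) : ℂ)) with hEdef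
    set A := a (β * t) with hAdef
    have hfun : (fun s : ℝ => Complex.I * ((α * s : ℝ) : ℂ))
        = fun s : ℝ => (Complex.I * (α : ℂ)) * (s : ℂ) := by
      funext s; push_cast; ring
    have h0 : HasDerivAt (fun s : ℝ => (Complex.I * (α : ℂ)) * (s : ℂ))
        (Complex.I * (α : ℂ)) t := by
      simpa using (Complex.ofRealCLM.hasDerivAt (x := t)).const_mul (Complex.I * (α : ℂ))
    have hlin : HasDerivAt (fun s : ℝ => Complex.I * ((α * s : ℝ) : ℂ))
        (Complex.I * (α : ℂ)) t := by rw [hfun]; exact h0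
    have hEder : HasDerivAt (fun s : ℝ => Complex.exp (Complex.I * ((α * s : ℝ) : ℂ)))
        (E * (Complex.I * (α : ℂ))) t := hlin.cexp
    have hbs : HasDerivAt (fun s : ℝ => β * s) β t := by
      simpa using (hasDerivAt_id t).const_mul β
    have hA' : HasDerivAt (fun s : ℝ => a (β * s)) (β • a' (β * t)) t :=
      HasDerivAt.scomp t (ha (β * t)) hbs
    have hu : HasDerivAt (fun s : ℝ => Complex.I * ((γ / α : ℝ) : ℂ)
          * Complex.exp (Complex.I * ((α * s : ℝ) : ℂ)))
        (Complex.I * ((γ / α : ℝ) : ℂ) * (E * (Complex.I * (α : ℂ)))) t := by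
      simpa [mul_assoc] using hEder.const_mul (Complex.I * ((γ / α : ℝ) : ℂ))
    have hprod := hu.mul hA'
    have htot := (hy t).add hprod
    refine HasDerivAt.congr_deriv htot ?_
    have h1 : ((γ / α : ℝ) : ℂ) * (α : ℂ) = (γ : ℂ) := by
      rw [← Complex.ofReal_mul, div_mul_cancel₀ γ hαne]
    have hc : Complex.I * ((γ / α : ℝ) : ℂ) * (Complex.I * (α : ℂ)) = -(γ : ℂ) := by
      linear_combination (((γ / α : ℝ) : ℂ) * (α : ℂ)) * Complex.I_sq - h1
    simp only [Complex.real_smul]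
    linear_combination (E * A) * hc
end

section
/- Suppose f, g : ℝⁿ → ℝⁿ and h : ℝⁿ → ℂ are C¹, α₀ > 0 and β₀ > 0 are constants, and x₀ : ℝ → ℝⁿ, y₀ : ℝ → ℂ are C¹ and 2π-periodic such that x(t) = x₀(β₀ t), y(t) = y₀(β₀ t) e^{iα₀ t} solves the system dx/dt = f(x) + g(x)|y|², dy/dt = h(x)y. For ψ ∈ ℝ let M(ψ) be the (n+2)×2 real matrix with columns (x₀'(ψ), Re y₀'(ψ), Im y₀'(ψ)) and (0, −Im y₀(ψ), Re y₀(ψ)). If M(ψ*) has rank 2 for some ψ* ∈ ℝ, then M(ψ) has rank 2 for every ψ ∈ ℝ. -/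
open Real Set

private lemma ode_const_of_vanish {E : Type*} [NormedAddCommGroup E] [NormedSpace ℝ E]
    [FiniteDimensional ℝ E]
    (F : E → E) (hF : ContDiff ℝ 1 F) (p : ℝ → E) (hp : ∀ t, HasDerivAt p (F (p t)) t)
    (R : ℝ) (hR : ∀ t, ‖p t‖ ≤ R) (t₀ : ℝ) (h0 : F (p t₀) = 0) :
    ∀ t, p t = p t₀ := by
  obtain ⟨C, hC⟩ : ∃ C, ∀ x ∈ Metric.closedBall (0 : E) R, ‖fderiv ℝ F x‖ ≤ C :=
    (isCompact_closedBall (0 : E) R).exists_bound_of_continuousOn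
      (hF.continuous_fderiv one_ne_zero).continuousOn
  set K : NNReal := ⟨max C 0, le_max_right _ _⟩ with hKdef
  have hK : LipschitzOnWith K F (Metric.closedBall (0 : E) R) := by
    apply (convex_closedBall _ _).lipschitzOnWith_of_nnnorm_fderiv_le
      (fun x _ => hF.differentiable one_ne_zero x)
    intro x hx
    rw [← NNReal.coe_le_coe]
    exact le_trans (hC x hx) (le_max_left _ _)
  intro t
  have hmem : ∀ u : ℝ, p u ∈ Metric.closedBall (0 : E) R := fun u => by
    simpa [Metric.mem_closedBall, dist_eq_norm] using hR u
  have ht₀ : t₀ ∈ Ioo (min t₀ t - 1) (max t₀ t + 1) :=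
    ⟨by linarith [min_le_left t₀ t], by linarith [le_max_left t₀ t]⟩
  have hcont : ContinuousOn p (Icc (min t₀ t - 1) (max t₀ t + 1)) :=
    Continuous.continuousOn (by
      exact continuous_iff_continuousAt.mpr fun u => (hp u).continuousAt)
  have := ODE_solution_unique_of_mem_Icc (v := fun _ z => F z)
    (s := fun _ => Metric.closedBall (0 : E) R) (fun _ _ => hK) ht₀
    hcont (fun u _ => hp u) (fun u _ => hmem u)
    continuousOn_const (fun u _ => by simpa [h0] using hasDerivAt_const u (p t₀))
    (fun u _ => hmem t₀) rfl
  exact this ⟨by linarith [min_le_right t₀ t], by linarith [le_max_right t₀ t]⟩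

private lemma ode_zero_of_zero (c : ℝ → ℂ) (C : ℝ) (hC : ∀ t, ‖c t‖ ≤ C)
    (y : ℝ → ℂ) (hy : ∀ t, HasDerivAt y (c t * y t) t) (t₀ : ℝ) (h0 : y t₀ = 0) :
    ∀ t, y t = 0 := by
  set K : NNReal := ⟨max C 0, le_max_right _ _⟩ with hKdef
  have hK : ∀ t : ℝ, LipschitzOnWith K (fun z : ℂ => c t * z) univ := by
    intro t
    apply LipschitzWith.lipschitzOnWith
    apply LipschitzWith.of_dist_le_mul
    intro z w
    have : dist (c t * z) (c t * w) = ‖c t‖ * dist z w := by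
      rw [dist_eq_norm, dist_eq_norm, ← mul_sub, norm_mul]
    rw [this]
    have : ‖c t‖ ≤ (K : ℝ) := le_trans (hC t) (le_max_left _ _)
    exact mul_le_mul_of_nonneg_right this dist_nonneg |>.trans_eq rfl
  intro t
  have ht₀ : t₀ ∈ Ioo (min t₀ t - 1) (max t₀ t + 1) :=
    ⟨by linarith [min_le_left t₀ t], by linarith [le_max_left t₀ t]⟩
  have hcont : ContinuousOn y (Icc (min t₀ t - 1) (max t₀ t + 1)) :=
    Continuous.continuousOn (continuous_iff_continuousAt.mpr fun u => (hy u).continuousAt)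
  have := ODE_solution_unique_of_mem_Icc (v := fun u z => c u * z)
    (s := fun _ => univ) (fun u _ => hK u) ht₀
    hcont (fun u _ => hy u) (fun u _ => trivial)
    continuousOn_const (fun u _ => by simpa using hasDerivAt_const u (0 : ℂ))
    (fun u _ => trivial) h0
  exact this ⟨by linarith [min_le_right t₀ t], by linarith [le_max_right t₀ t]⟩

/-- For a modulated-wave solution of the unperturbed system, the rank-2
condition on the matrix `M(ψ)` (whose columns are `(x₀'(ψ), Re y₀'(ψ), Im y₀'(ψ))` and
`(0, −Im y₀(ψ), Re y₀(ψ))`, rank 2 being expressed as linear independence of the two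
columns) holds for every `ψ` as soon as it holds for one `ψ*`. -/
theorem rank_condition_propagates
    (n : ℕ)
    (f g : (Fin n → ℝ) → Fin n → ℝ) (h : (Fin n → ℝ) → ℂ)
    (hf : ContDiff ℝ 1 f) (hg : ContDiff ℝ 1 g) (hh : ContDiff ℝ 1 h)
    (α₀ β₀ : ℝ) (hα₀ : 0 < α₀) (hβ₀ : 0 < β₀)
    (x₀ : ℝ → Fin n → ℝ) (y₀ : ℝ → ℂ)
    (hx₀ : ContDiff ℝ 1 x₀) (hy₀ : ContDiff ℝ 1 y₀)
    (hx₀per : Function.Periodic x₀ (2 * π)) (hy₀per : Function.Periodic y₀ (2 * π))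
    (x₀' : ℝ → Fin n → ℝ) (y₀' : ℝ → ℂ)
    (hx₀' : ∀ ψ : ℝ, HasDerivAt x₀ (x₀' ψ) ψ)
    (hy₀' : ∀ ψ : ℝ, HasDerivAt y₀ (y₀' ψ) ψ)
    (hsolx : ∀ t : ℝ, HasDerivAt (fun s : ℝ => x₀ (β₀ * s))
      (f (x₀ (β₀ * t)) + ‖y₀ (β₀ * t)‖ ^ 2 • g (x₀ (β₀ * t))) t)
    (hsoly : ∀ t : ℝ, HasDerivAt
      (fun s : ℝ => y₀ (β₀ * s) * Complex.exp (Complex.I * ((α₀ * s : ℝ) : ℂ)))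
      (h (x₀ (β₀ * t)) * (y₀ (β₀ * t) * Complex.exp (Complex.I * ((α₀ * t : ℝ) : ℂ)))) t)
    (ψstar : ℝ)
    (hrank : LinearIndependent ℝ
      ![((x₀' ψstar, (y₀' ψstar).re, (y₀' ψstar).im) : (Fin n → ℝ) × ℝ × ℝ),
        ((0, -(y₀ ψstar).im, (y₀ ψstar).re) : (Fin n → ℝ) × ℝ × ℝ)]) :
    ∀ ψ : ℝ, LinearIndependent ℝ
      ![((x₀' ψ, (y₀' ψ).re, (y₀' ψ).im) : (Fin n → ℝ) × ℝ × ℝ),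
        ((0, -(y₀ ψ).im, (y₀ ψ).re) : (Fin n → ℝ) × ℝ × ℝ)] := by
  have hβ' : (β₀ : ℂ) ≠ 0 := Complex.ofReal_ne_zero.mpr hβ₀.ne'
  -- the profile equations
  have hxeq : ∀ ψ, x₀' ψ = β₀⁻¹ • (f (x₀ ψ) + ‖y₀ ψ‖ ^ 2 • g (x₀ ψ)) := by
    intro ψ
    have hlin : HasDerivAt (fun s : ℝ => β₀ * s) β₀ (ψ / β₀) := by
      simpa using (hasDerivAt_id (ψ / β₀)).const_mul β₀
    have h1 : HasDerivAt (fun s : ℝ => x₀ (β₀ * s)) (β₀ • x₀' (β₀ * (ψ / β₀))) (ψ / β₀) :=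
      (hx₀' (β₀ * (ψ / β₀))).scomp (ψ / β₀) hlin
    have h2 := (hsolx (ψ / β₀)).unique h1
    rw [mul_div_cancel₀ ψ hβ₀.ne'] at h2
    rw [h2, smul_smul, inv_mul_cancel₀ hβ₀.ne', one_smul]
  have hyeq : ∀ ψ, y₀' ψ = β₀⁻¹ • ((h (x₀ ψ) - Complex.I * α₀) * y₀ ψ) := by
    intro ψ
    set t := ψ / β₀ with htdef
    have hψt : β₀ * t = ψ := mul_div_cancel₀ ψ hβ₀.ne'
    have hlin : HasDerivAt (fun s : ℝ => β₀ * s) β₀ t := by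
      simpa using (hasDerivAt_id t).const_mul β₀
    have hY : HasDerivAt (fun s : ℝ => y₀ (β₀ * s)) (β₀ • y₀' (β₀ * t)) t :=
      (hy₀' (β₀ * t)).scomp t hlin
    have hin : HasDerivAt (fun s : ℝ => ((α₀ * s : ℝ) : ℂ)) ((α₀ : ℂ)) t := by
      have : HasDerivAt (fun s : ℝ => α₀ * s) α₀ t := by
        simpa using (hasDerivAt_id t).const_mul α₀
      exact_mod_cast this.ofReal_comp
    have hE : HasDerivAt (fun s : ℝ => Complex.exp (Complex.I * ((α₀ * s : ℝ) : ℂ)))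
        (Complex.I * α₀ * Complex.exp (Complex.I * ((α₀ * t : ℝ) : ℂ))) t := by
      have := (hin.const_mul Complex.I).cexp
      simpa [mul_comm] using this
    have hprod := hY.mul hE
    have h2 := (hsoly t).unique hprod
    rw [hψt] at h2
    rw [Complex.real_smul] at h2
    have hE0 : Complex.exp (Complex.I * ((α₀ * t : ℝ) : ℂ)) ≠ 0 := Complex.exp_ne_zero _
    have key : (β₀ : ℂ) * y₀' ψ = (h (x₀ ψ) - Complex.I * α₀) * y₀ ψ := by
      apply mul_right_cancel₀ hE0
      linear_combination -h2
    rw [Complex.real_smul]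
    push_cast
    rw [inv_mul_eq_div, eq_div_iff hβ']
    linear_combination key
  -- the linear coefficient for y₀ and its boundedness
  set c : ℝ → ℂ := fun ψ => β₀⁻¹ • (h (x₀ ψ) - Complex.I * α₀) with hcdef
  have hyc : ∀ ψ, HasDerivAt y₀ (c ψ * y₀ ψ) ψ := by
    intro ψ
    have : c ψ * y₀ ψ = y₀' ψ := by rw [hyeq ψ, hcdef, smul_mul_assoc]
    rw [this]; exact hy₀' ψ
  have hccont : Continuous c := by
    refine Continuous.const_smul (g := fun ψ => h (x₀ ψ) - Complex.I * α₀) ?_ β₀⁻¹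
    exact (hh.continuous.comp hx₀.continuous).sub continuous_const
  have hcper : Function.Periodic c (2 * π) := fun ψ => by simp [hcdef, hx₀per ψ]
  obtain ⟨C, hC⟩ : ∃ C, ∀ ψ, ‖c ψ‖ ≤ C := by
    obtain ⟨C, hC⟩ := (isCompact_Icc (a := (0:ℝ)) (b := 2 * π)).exists_bound_of_continuousOn
      hccont.continuousOn
    refine ⟨C, fun ψ => ?_⟩
    obtain ⟨u, hu, hueq⟩ := hcper.exists_mem_Ico₀ Real.two_pi_pos ψ
    rw [hueq]; exact hC u (Ico_subset_Icc_self hu)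
  -- y₀ never vanishes
  have hy0ne : ∀ ψ, y₀ ψ ≠ 0 := by
    by_contra hcon
    push_neg at hcon
    obtain ⟨ψ₁, hψ₁⟩ := hcon
    have hall := ode_zero_of_zero c C hC y₀ hyc ψ₁ hψ₁
    have h2 : (![((x₀' ψstar, (y₀' ψstar).re, (y₀' ψstar).im) : (Fin n → ℝ) × ℝ × ℝ),
        ((0, -(y₀ ψstar).im, (y₀ ψstar).re) : (Fin n → ℝ) × ℝ × ℝ)]) 1 = 0 := by
      simp [hall ψstar]
    exact hrank.ne_zero 1 h2
  intro ψ
  by_cases hP : x₀' ψ = 0 ∧ (h (x₀ ψ)).re = 0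
  · -- then the same degeneracy holds at ψstar, contradicting hrank
    exfalso
    set p : ℝ → (Fin n → ℝ) × ℝ := fun φ => (x₀ φ, Complex.normSq (y₀ φ)) with hpdef
    set F : (Fin n → ℝ) × ℝ → (Fin n → ℝ) × ℝ :=
      fun q => (β₀⁻¹ • (f q.1 + q.2 • g q.1), 2 * β₀⁻¹ * (h q.1).re * q.2) with hFdef
    have hFC : ContDiff ℝ 1 F := by
      apply ContDiff.prodMk
      · exact ((hf.comp contDiff_fst).add (contDiff_snd.smul (hg.comp contDiff_fst))).const_smul _
      · exact ((contDiff_const.mul ((Complex.reCLM.contDiff).comp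
          (hh.comp contDiff_fst))).mul contDiff_snd)
    have hpd : ∀ φ, HasDerivAt p (F (p φ)) φ := by
      intro φ
      apply HasDerivAt.prodMk
      · have := hx₀' φ
        rw [hxeq φ] at this
        simpa [hpdef, Complex.sq_norm] using this
      · have hre : HasDerivAt (fun u => (y₀ u).re) ((y₀' φ).re) φ :=
          Complex.reCLM.hasFDerivAt.comp_hasDerivAt φ (hy₀' φ)
        have him : HasDerivAt (fun u => (y₀ u).im) ((y₀' φ).im) φ :=
          Complex.imCLM.hasFDerivAt.comp_hasDerivAt φ (hy₀' φ)
        have hns : HasDerivAt (fun u => Complex.normSq (y₀ u))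
            ((y₀' φ).re * (y₀ φ).re + (y₀ φ).re * (y₀' φ).re +
              ((y₀' φ).im * (y₀ φ).im + (y₀ φ).im * (y₀' φ).im)) φ := by
          have := (hre.mul hre).add (him.mul him)
          refine HasDerivAt.congr_of_eventuallyEq this ?_
          exact Filter.Eventually.of_forall fun u => by simp [Complex.normSq_apply]
        refine hns.congr_deriv ?_
        rw [hyeq φ]
        simp only [Complex.real_smul, Complex.mul_re, Complex.mul_im, Complex.sub_re,
          Complex.sub_im, Complex.I_re, Complex.I_im, Complex.ofReal_re, Complex.ofReal_im,
          Complex.normSq_apply, hpdef]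
        ring
    obtain ⟨R, hR⟩ : ∃ R, ∀ φ, ‖p φ‖ ≤ R := by
      have hpcont : Continuous p :=
        (hx₀.continuous.prodMk (Complex.continuous_normSq.comp hy₀.continuous))
      obtain ⟨R, hRb⟩ := (isCompact_Icc (a := (0:ℝ)) (b := 2 * π)).exists_bound_of_continuousOn
        hpcont.continuousOn
      have hpper : Function.Periodic p (2 * π) := fun φ => by
        simp [hpdef, hx₀per φ, hy₀per φ]
      refine ⟨R, fun φ => ?_⟩
      obtain ⟨u, hu, hueq⟩ := hpper.exists_mem_Ico₀ Real.two_pi_pos φ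
      rw [hueq]; exact hRb u (Ico_subset_Icc_self hu)
    have hF0 : F (p ψ) = 0 := by
      have h1 : (F (p ψ)).1 = 0 := by
        have := hxeq ψ
        rw [hP.1] at this
        simpa [hFdef, hpdef, ← Complex.sq_norm] using this.symm
      have h2 : (F (p ψ)).2 = 0 := by
        simp [hFdef, hpdef, hP.2]
      exact Prod.ext h1 h2
    have hconst := ode_const_of_vanish F hFC p hpd R hR ψ hF0
    have hxconst : ∀ φ, x₀ φ = x₀ ψ := fun φ => congrArg Prod.fst (hconst φ)
    have hx'0 : x₀' ψstar = 0 := by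
      have h1 : HasDerivAt (fun _ : ℝ => x₀ ψ) (x₀' ψstar) ψstar :=
        (hx₀' ψstar).congr_of_eventuallyEq
          (Filter.Eventually.of_forall fun u => (hxconst u).symm)
      exact h1.unique (hasDerivAt_const ψstar (x₀ ψ))
    have hre0 : (h (x₀ ψstar)).re = 0 := by rw [hxconst ψstar]; exact hP.2
    set b : ℝ := -(β₀⁻¹ * ((h (x₀ ψstar)).im - α₀)) with hbdef
    have hsum : (1:ℝ) • ((x₀' ψstar, (y₀' ψstar).re, (y₀' ψstar).im) : (Fin n → ℝ) × ℝ × ℝ)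
        + b • ((0, -(y₀ ψstar).im, (y₀ ψstar).re) : (Fin n → ℝ) × ℝ × ℝ) = 0 := by
      have hyre : (y₀' ψstar).re = b * (y₀ ψstar).im := by
        rw [hyeq ψstar]
        simp only [Complex.real_smul, Complex.mul_re, Complex.mul_im, Complex.sub_re,
          Complex.sub_im, Complex.I_re, Complex.I_im, Complex.ofReal_re, Complex.ofReal_im,
          hre0, hbdef]
        ring
      have hyim : (y₀' ψstar).im = -b * (y₀ ψstar).re := by
        rw [hyeq ψstar]
        simp only [Complex.real_smul, Complex.mul_re, Complex.mul_im, Complex.sub_re,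
          Complex.sub_im, Complex.I_re, Complex.I_im, Complex.ofReal_re, Complex.ofReal_im,
          hre0, hbdef]
        ring
      refine Prod.ext ?_ (Prod.ext ?_ ?_)
      · simp [hx'0]
      · simp [hyre]
      · simp [hyim]
    exact one_ne_zero ((LinearIndependent.pair_iff.mp hrank 1 b hsum).1)
  · -- non-degenerate case: prove linear independence
    rw [LinearIndependent.pair_iff]
    intro a b hab
    have h1 : a • x₀' ψ = 0 := by
      have := congrArg Prod.fst hab
      simpa using this
    have h2 : a * (y₀' ψ).re + b * (-(y₀ ψ).im) = 0 := by
      have := congrArg (fun q : (Fin n → ℝ) × ℝ × ℝ => q.2.1) hab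
      simpa [smul_eq_mul] using this
    have h3 : a * (y₀' ψ).im + b * (y₀ ψ).re = 0 := by
      have := congrArg (fun q : (Fin n → ℝ) × ℝ × ℝ => q.2.2) hab
      simpa [smul_eq_mul] using this
    -- complex form of the tail equations
    have hz : ((a : ℂ) * c ψ + (b : ℂ) * Complex.I) * y₀ ψ = 0 := by
      apply Complex.ext
      · simp only [Complex.mul_re, Complex.add_re, Complex.add_im, Complex.mul_im,
          Complex.ofReal_re, Complex.ofReal_im, Complex.I_re, Complex.I_im, Complex.zero_re]
        have hcre : (c ψ * y₀ ψ).re = (y₀' ψ).re := by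
          rw [hcdef]; rw [smul_mul_assoc, ← hyeq ψ]
        have hcim : (c ψ * y₀ ψ).im = (y₀' ψ).im := by
          rw [hcdef]; rw [smul_mul_assoc, ← hyeq ψ]
        rw [Complex.mul_re] at hcre
        rw [Complex.mul_im] at hcim
        linear_combination a * hcre + h2
      · simp only [Complex.mul_im, Complex.add_re, Complex.add_im, Complex.mul_re,
          Complex.ofReal_re, Complex.ofReal_im, Complex.I_re, Complex.I_im, Complex.zero_im]
        have hcre : (c ψ * y₀ ψ).re = (y₀' ψ).re := by
          rw [hcdef]; rw [smul_mul_assoc, ← hyeq ψ]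
        have hcim : (c ψ * y₀ ψ).im = (y₀' ψ).im := by
          rw [hcdef]; rw [smul_mul_assoc, ← hyeq ψ]
        rw [Complex.mul_re] at hcre
        rw [Complex.mul_im] at hcim
        linear_combination a * hcim + h3
    have h4 : (a : ℂ) * c ψ + (b : ℂ) * Complex.I = 0 :=
      (mul_eq_zero.mp hz).resolve_right (hy0ne ψ)
    by_cases ha : a = 0
    · refine ⟨ha, ?_⟩
      rw [ha] at h4
      simpa [Complex.ext_iff] using h4
    · exfalso
      apply hP
      constructor
      · have := h1
        rcases smul_eq_zero.mp this with hc | hx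
        · exact absurd hc ha
        · exact hx
      · have hre := congrArg Complex.re h4
        simp only [Complex.add_re, Complex.mul_re, Complex.ofReal_re, Complex.ofReal_im,
          Complex.I_re, Complex.I_im, Complex.zero_re, hcdef] at hre
        have hcre : (c ψ).re = β₀⁻¹ * (h (x₀ ψ)).re := by
          simp [hcdef, Complex.real_smul, Complex.mul_re]
        rw [hcdef] at hcre
        have : a * (β₀⁻¹ * (h (x₀ ψ)).re) = 0 := by
          rw [← hcre]
          simpa using hre
        have hb0 : β₀⁻¹ ≠ 0 := inv_ne_zero hβ₀.ne'
        rcases mul_eq_zero.mp this with hc | hd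
        · exact absurd hc ha
        · rcases mul_eq_zero.mp hd with he | hf'
          · exact absurd he hb0
          · exact hf'
end

section
/- Let A : ℝ → M_m(ℝ) be continuous and T-periodic (T > 0). Suppose the linear system dz/dt = A(t) z has a nonzero T-periodic solution q, and the monodromy matrix of this system over one period T has eigenvalue 1 with algebraic multiplicity one. Then the adjoint system dp/dt = −A(t)ᵀ p has a T-periodic solution p satisfying p(t)ᵀ q(t) = 1 for all t ∈ ℝ. -/
open Real Set
open Polynomial

attribute [local instance] Matrix.linftyOpNormedRing Matrix.linftyOpNormedAlgebra

namespace AdjointAux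

variable {m : ℕ}

/-- The identity linear equiv between matrices (with linfty op norm) and the pi type. -/
noncomputable def matEquiv (m : ℕ) : Matrix (Fin m) (Fin m) ℝ ≃L[ℝ] (Fin m → Fin m → ℝ) :=
  LinearEquiv.toContinuousLinearEquiv
    { toFun := fun M i j => M i j
      invFun := fun f => Matrix.of f
      map_add' := fun _ _ => rfl
      map_smul' := fun _ _ => rfl
      left_inv := fun _ => rfl
      right_inv := fun _ => rfl }

lemma hasDerivAt_matrix {Ω : ℝ → Matrix (Fin m) (Fin m) ℝ} {B : Matrix (Fin m) (Fin m) ℝ}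
    {t : ℝ} :
    HasDerivAt Ω B t ↔ ∀ i j, HasDerivAt (fun s => Ω s i j) (B i j) t := by
  constructor
  · intro h i j
    have h1 : HasDerivAt (fun s => (matEquiv m) (Ω s)) ((matEquiv m) B) t :=
      ((matEquiv m).hasFDerivAt.comp_hasDerivAt t h)
    exact (hasDerivAt_pi.1 (hasDerivAt_pi.1 h1 i)) j
  · intro h
    have h1 : HasDerivAt (fun s => (matEquiv m) (Ω s)) ((matEquiv m) B) t :=
      hasDerivAt_pi.2 fun i => hasDerivAt_pi.2 fun j => h i j
    have h2 := ((matEquiv m).symm.hasFDerivAt.comp_hasDerivAt t h1)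
    have h3 := h2
    simp only [Function.comp_def, ContinuousLinearEquiv.symm_apply_apply] at h3
    exact h3

lemma mulVec_norm_le (B : Matrix (Fin m) (Fin m) ℝ) (x : Fin m → ℝ) :
    ‖B.mulVec x‖ ≤ (∑ i, ∑ j, |B i j|) * ‖x‖ := by
  have hC : (0:ℝ) ≤ ∑ i, ∑ j, |B i j| :=
    Finset.sum_nonneg fun i _ => Finset.sum_nonneg fun j _ => abs_nonneg _
  rw [pi_norm_le_iff_of_nonneg (by positivity)]
  intro i
  have h1 : ‖B.mulVec x i‖ = |∑ j, B i j * x j| := by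
    simp [Matrix.mulVec, dotProduct, Real.norm_eq_abs]
  rw [h1]
  calc |∑ j, B i j * x j| ≤ ∑ j, |B i j * x j| := Finset.abs_sum_le_sum_abs _ _
    _ ≤ ∑ j, |B i j| * ‖x‖ := by
        refine Finset.sum_le_sum fun j _ => ?_
        rw [abs_mul]
        exact mul_le_mul_of_nonneg_left ((Real.norm_eq_abs _ ▸ norm_le_pi_norm x j)) (abs_nonneg _)
    _ = (∑ j, |B i j|) * ‖x‖ := by rw [Finset.sum_mul]
    _ ≤ (∑ i, ∑ j, |B i j|) * ‖x‖ := by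
        refine mul_le_mul_of_nonneg_right ?_ (norm_nonneg _)
        exact Finset.single_le_sum (f := fun i => ∑ j, |B i j|)
          (fun i _ => Finset.sum_nonneg fun j _ => abs_nonneg _) (Finset.mem_univ i)

lemma ode_unique (A : ℝ → Matrix (Fin m) (Fin m) ℝ)
    (hA : ∀ i j, Continuous fun t : ℝ => A t i j)
    (f g : ℝ → Fin m → ℝ)
    (hf : ∀ t, HasDerivAt f ((A t).mulVec (f t)) t)
    (hg : ∀ t, HasDerivAt g ((A t).mulVec (g t)) t)
    (t₀ : ℝ) (h0 : f t₀ = g t₀) (t : ℝ) : f t = g t := by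
  set a := min t₀ t - 1 with ha
  set b := max t₀ t + 1 with hb
  have hab : a ≤ b := by
    have := min_le_max (a := t₀) (b := t); simp only [ha, hb]; linarith
  have hcont : ContinuousOn (fun s => ∑ i, ∑ j, |A s i j|) (Icc a b) := by
    refine Continuous.continuousOn ?_
    exact continuous_finset_sum _ fun i _ => continuous_finset_sum _ fun j _ => (hA i j).abs
  obtain ⟨C, hC⟩ := (isCompact_Icc (a := a) (b := b)).exists_bound_of_continuousOn hcont
  set K : NNReal := ⟨max C 0, le_max_right _ _⟩ with hK
  set v : ℝ → (Fin m → ℝ) → (Fin m → ℝ) :=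
    fun s x => (A ((Set.projIcc a b hab s : Icc a b) : ℝ)).mulVec x with hv
  have hlip : ∀ s, LipschitzWith K (v s) := by
    intro s
    apply LipschitzWith.of_dist_le_mul
    intro x y
    have hc : ((Set.projIcc a b hab s : Icc a b) : ℝ) ∈ Icc a b := (Set.projIcc a b hab s).2
    set c := ((Set.projIcc a b hab s : Icc a b) : ℝ)
    have h1 : dist (v s x) (v s y) = ‖(A c).mulVec (x - y)‖ := by
      rw [dist_eq_norm, hv]
      congr 1
      simp [Matrix.mulVec_sub, c]
    rw [h1]
    have h2 := mulVec_norm_le (A c) (x - y)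
    have h3 : (∑ i, ∑ j, |A c i j|) ≤ C := by
      have := hC c hc
      rwa [Real.norm_eq_abs, abs_of_nonneg (Finset.sum_nonneg fun i _ =>
        Finset.sum_nonneg fun j _ => abs_nonneg _)] at this
    have h4 : (∑ i, ∑ j, |A c i j|) ≤ (K : ℝ) := le_trans h3 (le_max_left _ _)
    calc ‖(A c).mulVec (x - y)‖ ≤ (∑ i, ∑ j, |A c i j|) * ‖x - y‖ := h2
      _ ≤ (K : ℝ) * ‖x - y‖ := mul_le_mul_of_nonneg_right h4 (norm_nonneg _)
      _ = (K : ℝ) * dist x y := by rw [dist_eq_norm]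
  have ht₀ : t₀ ∈ Ioo a b := by
    constructor
    · simp only [ha]; have := min_le_left t₀ t; linarith
    · simp only [hb]; have := le_max_left t₀ t; linarith
  have key : EqOn f g (Icc a b) := by
    refine ODE_solution_unique_of_mem_Icc (v := v) (s := fun _ => univ)
      (fun s _ => (hlip s).lipschitzOnWith) ht₀
      (fun u _ => (hf u).continuousAt.continuousWithinAt) ?_ (fun _ _ => trivial)
      (fun u _ => (hg u).continuousAt.continuousWithinAt) ?_ (fun _ _ => trivial) h0
    · intro u hu
      have : v u (f u) = (A u).mulVec (f u) := by
        rw [hv]; simp [Set.projIcc_of_mem hab (Ioo_subset_Icc_self hu)]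
      rw [this]; exact hf u
    · intro u hu
      have : v u (g u) = (A u).mulVec (g u) := by
        rw [hv]; simp [Set.projIcc_of_mem hab (Ioo_subset_Icc_self hu)]
      rw [this]; exact hg u
  refine key ?_
  constructor
  · simp only [ha]; have := min_le_right t₀ t; linarith
  · simp only [hb]; have := le_max_right t₀ t; linarith

lemma omega_solves (A : ℝ → Matrix (Fin m) (Fin m) ℝ) (Ω : ℝ → Matrix (Fin m) (Fin m) ℝ)
    (hΩ : ∀ (t : ℝ) (i j : Fin m),
      HasDerivAt (fun s : ℝ => Ω s i j) ((A t * Ω t) i j) t)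
    (v0 : Fin m → ℝ) (t : ℝ) :
    HasDerivAt (fun s => (Ω s).mulVec v0) ((A t).mulVec ((Ω t).mulVec v0)) t := by
  rw [hasDerivAt_pi]
  intro i
  have h1 : HasDerivAt (fun s => ∑ j, Ω s i j * v0 j) (∑ j, (A t * Ω t) i j * v0 j) t :=
    HasDerivAt.fun_sum fun j _ => (hΩ t i j).mul_const (v0 j)
  have h2 : (fun s => (Ω s).mulVec v0 i) = fun s => ∑ j, Ω s i j * v0 j := by
    funext s; simp [Matrix.mulVec, dotProduct]
  have h3 : (A t).mulVec ((Ω t).mulVec v0) i = ∑ j, (A t * Ω t) i j * v0 j := by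
    rw [Matrix.mulVec_mulVec]
    simp [Matrix.mulVec, dotProduct]
  rw [h2, h3]
  exact h1

lemma aeval_mulVec (M : Matrix (Fin m) (Fin m) ℝ) (v : Fin m → ℝ) (hv : M.mulVec v = v)
    (r : Polynomial ℝ) : ((Polynomial.aeval M) r).mulVec v = r.eval 1 • v := by
  induction r using Polynomial.induction_on with
  | C a =>
      rw [Polynomial.aeval_C, Polynomial.eval_C, Algebra.algebraMap_eq_smul_one,
        Matrix.smul_mulVec, Matrix.one_mulVec]
  | add p q hp hq =>
      rw [map_add, Matrix.add_mulVec, hp, hq, Polynomial.eval_add, add_smul]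
  | monomial n a ih =>
      have h1 : (Polynomial.C a * Polynomial.X ^ (n + 1)) =
          (Polynomial.C a * Polynomial.X ^ n) * Polynomial.X := by ring
      rw [h1, map_mul, Polynomial.aeval_X, ← Matrix.mulVec_mulVec, hv, ih]
      simp

lemma transpose_mulVec_apply (B : Matrix (Fin m) (Fin m) ℝ) (w : Fin m → ℝ) (i : Fin m) :
    B.transpose.mulVec w i = ∑ j, B j i * w j := by
  simp [Matrix.mulVec, dotProduct, Matrix.transpose_apply, mul_comm]

end AdjointAux


/-- If the `T`-periodic linear system `dz/dt = A(t) z` has a nonzero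
`T`-periodic solution `q` and the monodromy matrix has eigenvalue `1` with algebraic
multiplicity one, then the adjoint system `dp/dt = −A(t)ᵀ p` has a `T`-periodic solution
`p` normalized so that `p(t)ᵀ q(t) = 1` for all `t`. -/
theorem adjoint_periodic_solution_normalized
    (m : ℕ)
    (A : ℝ → Matrix (Fin m) (Fin m) ℝ)
    (hAcont : ∀ i j : Fin m, Continuous fun t : ℝ => A t i j)
    (T : ℝ) (hT : 0 < T)
    (hAper : ∀ t : ℝ, A (t + T) = A t)
    (q : ℝ → Fin m → ℝ)
    (hq : ∀ (t : ℝ) (i : Fin m),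
      HasDerivAt (fun s : ℝ => q s i) ((A t).mulVec (q t) i) t)
    (hqper : ∀ t : ℝ, q (t + T) = q t)
    (hqne : ∃ t : ℝ, q t ≠ 0)
    (Ω : ℝ → Matrix (Fin m) (Fin m) ℝ)
    (hΩ0 : Ω 0 = 1)
    (hΩ : ∀ (t : ℝ) (i j : Fin m),
      HasDerivAt (fun s : ℝ => Ω s i j) ((A t * Ω t) i j) t)
    (hmono : (Matrix.charpoly (Ω T)).rootMultiplicity 1 = 1) :
    ∃ p : ℝ → Fin m → ℝ,
      (∀ (t : ℝ) (i : Fin m),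
        HasDerivAt (fun s : ℝ => p s i) (-((A t).transpose.mulVec (p t) i)) t) ∧
      (∀ t : ℝ, p (t + T) = p t) ∧
      (∀ t : ℝ, ∑ i : Fin m, p t i * q t i = 1) := by
  classical
  have hqv : ∀ t, HasDerivAt q ((A t).mulVec (q t)) t := fun t => hasDerivAt_pi.2 (hq t)
  set M := Ω T with hM
  -- q is propagated by Ω
  have hqΩ : ∀ t, q t = (Ω t).mulVec (q 0) := by
    intro t
    refine AdjointAux.ode_unique A hAcont q (fun s => (Ω s).mulVec (q 0)) hqv
      (AdjointAux.omega_solves A Ω hΩ (q 0)) 0 ?_ t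
    show q 0 = (Ω 0).mulVec (q 0)
    rw [hΩ0, Matrix.one_mulVec]
  -- Ω t is invertible
  have hU : ∀ t, IsUnit (Ω t) := by
    intro t
    rw [Matrix.isUnit_iff_isUnit_det, isUnit_iff_ne_zero]
    intro hdet0
    obtain ⟨v, hvne, hv0⟩ := (Matrix.exists_mulVec_eq_zero_iff).2 hdet0
    have hgz : ∀ u : ℝ, HasDerivAt (fun _ : ℝ => (0 : Fin m → ℝ))
        ((A u).mulVec ((fun _ : ℝ => (0 : Fin m → ℝ)) u)) u := by
      intro u
      simpa [Matrix.mulVec_zero] using hasDerivAt_const u (0 : Fin m → ℝ)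
    have hzero : ∀ s, (Ω s).mulVec v = (fun _ : ℝ => (0 : Fin m → ℝ)) s := by
      intro s
      exact AdjointAux.ode_unique A hAcont (fun s => (Ω s).mulVec v)
        (fun _ : ℝ => (0 : Fin m → ℝ)) (AdjointAux.omega_solves A Ω hΩ v) hgz
        t (by simpa using hv0) s
    have h0' := hzero 0
    rw [hΩ0, Matrix.one_mulVec] at h0'
    exact hvne h0'
  have hdet : ∀ t, IsUnit (Ω t).det := fun t => (Matrix.isUnit_iff_isUnit_det _).mp (hU t)
  -- shift property
  have hΩshift : ∀ (t : ℝ) (i j : Fin m),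
      HasDerivAt (fun s : ℝ => Ω (s + T) i j) ((A t * Ω (t + T)) i j) t := by
    intro t i j
    have h1 := (hΩ (t + T) i j).comp t ((hasDerivAt_id t).add_const T)
    simpa [Function.comp_def, hAper] using h1
  have hshiftv : ∀ (v : Fin m → ℝ) (t : ℝ),
      (Ω (t + T)).mulVec v = (Ω t).mulVec (M.mulVec v) := by
    intro v t
    refine AdjointAux.ode_unique A hAcont _ _
      (AdjointAux.omega_solves A (fun s => Ω (s + T)) hΩshift v)
      (AdjointAux.omega_solves A Ω hΩ (M.mulVec v)) 0 ?_ t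
    simp [hΩ0, Matrix.one_mulVec, hM]
  have hΩT : ∀ t, Ω (t + T) = Ω t * M := by
    intro t
    ext i j
    have h := congrFun (hshiftv (Pi.single j 1) t) i
    rw [Matrix.mulVec_mulVec] at h
    simpa [Matrix.mulVec_single, Matrix.mulVec_mulVec] using h
  -- eigenvector facts
  set q0 := q 0 with hq0def
  have hq0ne : q0 ≠ 0 := by
    intro h
    obtain ⟨t, ht⟩ := hqne
    exact ht (by rw [hqΩ t, h, Matrix.mulVec_zero])
  have hMq0 : M.mulVec q0 = q0 := by
    have h1 := hqΩ T
    have h2 : q T = q 0 := by have := hqper 0; simpa using this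
    rw [h2] at h1
    exact h1.symm
  -- polynomial factorization
  set c := M.charpoly with hc
  have hcne : c ≠ 0 := (Matrix.charpoly_monic M).ne_zero
  set gp := c /ₘ (X - C (1:ℝ)) with hgp
  have hfact : (X - C (1:ℝ)) * gp = c := by
    have h := Polynomial.pow_mul_divByMonic_rootMultiplicity_eq c (1:ℝ)
    rw [hmono, pow_one] at h
    exact h
  have hg1 : gp.eval 1 ≠ 0 := by
    have h := Polynomial.eval_divByMonic_pow_rootMultiplicity_ne_zero (p := c) 1 hcne
    rw [hmono, pow_one] at h
    exact h
  set G := (Polynomial.aeval M) gp with hG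
  have haevalX1 : (Polynomial.aeval M) (X - C (1:ℝ)) = M - 1 := by
    rw [map_sub, Polynomial.aeval_X, Polynomial.aeval_C, map_one]
  have hCH : (M - 1) * G = 0 := by
    have h1 : (Polynomial.aeval M) c = 0 := Matrix.aeval_self_charpoly M
    rw [← hfact, map_mul, haevalX1] at h1
    exact h1
  have hGM : G * (M - 1) = 0 := by
    have h1 : (Polynomial.aeval M) c = 0 := Matrix.aeval_self_charpoly M
    rw [← hfact, mul_comm, map_mul, haevalX1] at h1
    exact h1
  have hGM' : G * M = G := by
    have h := hGM
    rw [mul_sub, mul_one, sub_eq_zero] at h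
    exact h
  have hGq0 : G.mulVec q0 = gp.eval 1 • q0 := AdjointAux.aeval_mulVec M q0 hMq0 gp
  set w0 := G.transpose.mulVec q0 with hw0
  have hMw0 : M.transpose.mulVec w0 = w0 := by
    rw [hw0, Matrix.mulVec_mulVec, ← Matrix.transpose_mul, hGM']
  have hw0q0 : dotProduct w0 q0 = gp.eval 1 * dotProduct q0 q0 := by
    rw [hw0, Matrix.mulVec_transpose, ← Matrix.dotProduct_mulVec, hGq0,
      dotProduct_smul]
    simp [smul_eq_mul]
  have hq0q0 : dotProduct q0 q0 ≠ 0 := fun h =>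
    hq0ne (dotProduct_self_eq_zero.mp h)
  have hw0q0ne : dotProduct w0 q0 ≠ 0 := by
    rw [hw0q0]; exact mul_ne_zero hg1 hq0q0
  set w := (dotProduct w0 q0)⁻¹ • w0 with hw
  have hMw : M.transpose.mulVec w = w := by rw [hw, Matrix.mulVec_smul, hMw0]
  have hwq0 : dotProduct w q0 = 1 := by
    rw [hw, smul_dotProduct, smul_eq_mul, inv_mul_cancel₀ hw0q0ne]
  -- derivative of the inverse
  have hΨd : ∀ t, HasDerivAt (fun s => (Ω s)⁻¹) (-((Ω t)⁻¹ * A t)) t := by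
    intro t
    have hΩd : HasDerivAt Ω (A t * Ω t) t := AdjointAux.hasDerivAt_matrix.2 (hΩ t)
    set u := (hU t).unit with hu
    have hcoe : (u : Matrix (Fin m) (Fin m) ℝ) = Ω t := (hU t).unit_spec
    have hf : HasFDerivAt Ring.inverse
        (-ContinuousLinearMap.mulLeftRight ℝ _ (↑u⁻¹) (↑u⁻¹)) (Ω t) := by
      rw [← hcoe]; exact hasFDerivAt_ringInverse u
    have hcomp := hf.comp_hasDerivAt t hΩd
    have hstep : HasDerivAt (fun s => Ring.inverse (Ω s))
        (-(((u⁻¹ : (Matrix (Fin m) (Fin m) ℝ)ˣ) : Matrix (Fin m) (Fin m) ℝ) * (A t * Ω t) *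
            ((u⁻¹ : (Matrix (Fin m) (Fin m) ℝ)ˣ) : Matrix (Fin m) (Fin m) ℝ))) t := by
      simp only [Function.comp_def, ContinuousLinearMap.neg_apply,
        ContinuousLinearMap.mulLeftRight_apply] at hcomp
      exact hcomp
    have hu_inv : ((u⁻¹ : (Matrix (Fin m) (Fin m) ℝ)ˣ) : Matrix (Fin m) (Fin m) ℝ)
        = (Ω t)⁻¹ := by
      rw [Matrix.coe_units_inv, hcoe]
    rw [hu_inv] at hstep
    have hfun : (fun s => Ring.inverse (Ω s)) = fun s => (Ω s)⁻¹ := by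
      funext s; rw [Matrix.nonsing_inv_eq_ringInverse]
    rw [hfun] at hstep
    have hval : (Ω t)⁻¹ * (A t * Ω t) * (Ω t)⁻¹ = (Ω t)⁻¹ * A t := by
      rw [mul_assoc, mul_assoc, Matrix.mul_nonsing_inv _ (hdet t), mul_one]
    rw [hval] at hstep
    exact hstep
  have hΨentry : ∀ (t : ℝ) (i j : Fin m),
      HasDerivAt (fun s => (Ω s)⁻¹ i j) ((-((Ω t)⁻¹ * A t)) i j) t :=
    fun t i j => AdjointAux.hasDerivAt_matrix.1 (hΨd t) i j
  refine ⟨fun t => ((Ω t)⁻¹).transpose.mulVec w, ?_, ?_, ?_⟩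
  · -- derivative
    intro t i
    show HasDerivAt (fun s => ((Ω s)⁻¹).transpose.mulVec w i)
      (-((A t).transpose.mulVec (((Ω t)⁻¹).transpose.mulVec w) i)) t
    have h1 : HasDerivAt (fun s => ∑ j, (Ω s)⁻¹ j i * w j)
        (∑ j, (-((Ω t)⁻¹ * A t)) j i * w j) t :=
      HasDerivAt.fun_sum fun j _ => (hΨentry t j i).mul_const (w j)
    have h2 : (fun s => ((Ω s)⁻¹).transpose.mulVec w i)
        = fun s => ∑ j, (Ω s)⁻¹ j i * w j := by
      funext s; rw [AdjointAux.transpose_mulVec_apply]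
    have h3 : -((A t).transpose.mulVec (((Ω t)⁻¹).transpose.mulVec w) i)
        = ∑ j, (-((Ω t)⁻¹ * A t)) j i * w j := by
      rw [Matrix.mulVec_mulVec, ← Matrix.transpose_mul, AdjointAux.transpose_mulVec_apply]
      simp [Matrix.neg_apply, neg_mul]
    rw [h2, h3]
    exact h1
  · -- periodicity
    intro t
    show ((Ω (t + T))⁻¹).transpose.mulVec w = ((Ω t)⁻¹).transpose.mulVec w
    have hMT : IsUnit M.transpose.det := by
      rw [Matrix.det_transpose]; exact hdet T
    have hwfix : (M.transpose)⁻¹.mulVec w = w := by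
      conv_lhs => rw [← hMw]
      rw [Matrix.mulVec_mulVec, Matrix.nonsing_inv_mul _ hMT, Matrix.one_mulVec]
    rw [hΩT t, Matrix.mul_inv_rev, Matrix.transpose_mul, ← Matrix.mulVec_mulVec,
      Matrix.transpose_nonsing_inv, Matrix.transpose_nonsing_inv, hwfix]
  · -- normalization
    intro t
    show ∑ i, (((Ω t)⁻¹).transpose.mulVec w) i * q t i = 1
    have hdp : (∑ i, (((Ω t)⁻¹).transpose.mulVec w) i * q t i)
        = dotProduct (((Ω t)⁻¹).transpose.mulVec w) (q t) := rfl
    rw [hdp, hqΩ t, Matrix.mulVec_transpose, ← Matrix.dotProduct_mulVec,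
      Matrix.mulVec_mulVec, Matrix.nonsing_inv_mul _ (hdet t), Matrix.one_mulVec, hwq0]
end
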